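/- Assume p = 2 (the case d = gl.dim Λ(n,l), i.e. Λ(n,l) is d-representation-finite). Then the number of well-configured C-data equals 2n + l − 1. (By Theorem A this is exactly the number of summand-maximal τ_d-rigid pairs of Λ(n,l).) -/

import Mathlib

open scoped Classical

/-- The numerical setup under which the truncated linear Nakayama algebra `Λ(n,l)`
admits a `d`-cluster tilting subcategory, together with the integers `s i`
(defined by `2 * s i = …`). -/
structure NakSetup where
  n : ℤ
  l : ℤ
  d : ℤ
  p : ℤ
  s : ℤ → ℤ
  hl : 2 ≤ l
  hd : 2 ≤ d
  hp : 1 ≤ p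
  hn : 2 * n = (p - 1) * ((d - 1) * l + 2) + l
  hcase : l = 2 ∨ (2 < l ∧ Even d ∧ Even p)
  hs_odd : ∀ i, 1 ≤ i → i ≤ p → Odd i → 2 * s i = (i - 1) * (d - 1) * l + 2 * i
  hs_even : ∀ i, 1 ≤ i → i ≤ p → Even i → 2 * s i = (i - 1) * ((d - 1) * l + 2) + l

/-- A `C`-datum: subsets `X i ⊆ [1, l-1]` for `2 ≤ i ≤ p` (empty outside this range)
together with disjoint subsets `R, B ⊆ [1, n]`. -/
structure CDatum (S : NakSetup) where
  X : ℤ → Finset ℤ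
  R : Finset ℤ
  B : Finset ℤ
  hX : ∀ i, X i ⊆ Finset.Icc 1 (S.l - 1)
  hXout : ∀ i, ¬(2 ≤ i ∧ i ≤ S.p) → X i = ∅
  hR : R ⊆ Finset.Icc 1 S.n
  hB : B ⊆ Finset.Icc 1 S.n
  hRB : Disjoint R B

namespace CDatum

variable {S : NakSetup}

/-- `m i = |X i|` (as an integer). -/
noncomputable def m (D : CDatum S) (i : ℤ) : ℤ := (D.X i).card

/-- `l_i`: the minimum of `X i`, or `l` if `X i = ∅`. -/
noncomputable def lo (D : CDatum S) (i : ℤ) : ℤ :=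
  if h : (D.X i).Nonempty then (D.X i).min' h else S.l

/-- `n_i`: the maximum of `X i`, or `0` if `X i = ∅`. -/
noncomputable def hi (D : CDatum S) (i : ℤ) : ℤ :=
  if h : (D.X i).Nonempty then (D.X i).max' h else 0

/-- The interval `𝖡_i`. -/
noncomputable def BI (D : CDatum S) (i : ℤ) : Finset ℤ :=
  if Odd i then Finset.Icc (S.s i) (S.s i + D.hi i - 1)
  else Finset.Icc (S.s i - D.hi i + 1) (S.s i)

/-- The interval `𝖱_i`. -/
noncomputable def RI (D : CDatum S) (i : ℤ) : Finset ℤ :=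
  if Odd i then Finset.Icc (S.s (i - 1) - (S.l - D.lo i) + 1) (S.s (i - 1))
  else Finset.Icc (S.s (i - 1)) (S.s (i - 1) + (S.l - D.lo i) - 1)

/-- A `C`-datum is rigid (the combinatorial form of being a `τ_d`-rigid pair). -/
def Rigid (D : CDatum S) : Prop :=
  (∀ x ∈ D.B, ∀ y ∈ D.R, x < y →
      ∃ z, x < z ∧ z + S.l - 2 < y ∧ Finset.Icc z (z + S.l - 2) ∩ (D.R ∪ D.B) = ∅) ∧
  (∀ i, 2 ≤ i → i ≤ S.p → Odd i →
      D.hi (i - 1) + D.hi i ≤ S.l - 1 ∧ S.l + 1 ≤ D.lo i + D.lo (i + 1) ∧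
      (S.d = 2 → D.hi i ≤ D.lo (i + 2) + 1 ∧ D.hi (i - 2) ≤ D.lo i + 1)) ∧
  (∀ i, 2 ≤ i → i ≤ S.p → Even i →
      D.hi i + D.hi (i + 1) ≤ S.l - 1 ∧ S.l + 1 ≤ D.lo (i - 1) + D.lo i) ∧
  (∀ i, 2 ≤ i → i ≤ S.p → D.R ∩ D.RI i = ∅ ∧ D.B ∩ D.BI i = ∅)

/-- The left endpoint of `Ξ(i, i+k)` (the left endpoint of `𝖱_i`). -/
noncomputable def xiLo (D : CDatum S) (i : ℤ) : ℤ :=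
  if Odd i then S.s (i - 1) - (S.l - D.lo i) + 1 else S.s (i - 1)

/-- The right endpoint of `Ξ(i, i+k)`, depending on `j = i + k`
(the right endpoint of `𝖡_{i+k}`). -/
noncomputable def xiHi (D : CDatum S) (j : ℤ) : ℤ :=
  if Even j then S.s j else S.s j + D.hi j - 1

/-- The interval `Ξ(i, i+k)`. -/
noncomputable def Xi (D : CDatum S) (i k : ℤ) : Finset ℤ :=
  Finset.Icc (D.xiLo i) (D.xiHi (i + k))

/-- The union `𝖡_2 ∪ … ∪ 𝖡_p`. -/
noncomputable def BigB (D : CDatum S) : Finset ℤ :=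
  (Finset.Icc 2 S.p).biUnion fun i => D.BI i

/-- The union `𝖱_2 ∪ … ∪ 𝖱_p`. -/
noncomputable def BigR (D : CDatum S) : Finset ℤ :=
  (Finset.Icc 2 S.p).biUnion fun i => D.RI i

/-- The interval `I` is support. -/
def IsSupport (D : CDatum S) (I : Finset ℤ) : Prop :=
  D.R ∩ I = ∅ ∧ D.B ∩ I = I \ D.BigB

/-- The interval `I` is rigid. -/
def IsRigidI (D : CDatum S) (I : Finset ℤ) : Prop :=
  D.B ∩ I = ∅ ∧ D.R ∩ I = I \ D.BigR

/-- The interval `I` is support to rigid at `x ∈ I`. -/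
def IsSuppToRigid (D : CDatum S) (I : Finset ℤ) (x : ℤ) : Prop :=
  x ∈ I ∧ D.B ∩ I = {y ∈ I | y ≤ x} ∧ (D.B ∩ I).Nonempty ∧
    D.R ∩ I = {y ∈ I | x + S.l ≤ y} ∧ (D.R ∩ I).Nonempty

/-- The interval `I` is rigid to support at `x ∈ I`. -/
def IsRigidToSupp (D : CDatum S) (I : Finset ℤ) (x : ℤ) : Prop :=
  x ∈ I ∧ D.R ∩ I = {y ∈ I | y ≤ x} ∧ (D.R ∩ I).Nonempty ∧
    D.B ∩ I = {y ∈ I | x + 1 ≤ y} ∧ (D.B ∩ I).Nonempty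

/-- `(X_i, …, X_{i+k})` is an admissible configuration (types (I)–(VIII)). -/
def Admissible (D : CDatum S) (i k : ℤ) : Prop :=
  2 ≤ i ∧ i + k ≤ S.p ∧ 0 ≤ k ∧
  (∀ j, 0 ≤ j → j ≤ k → (D.X (i + j)).Nonempty) ∧
  ((k = 0 ∧ D.lo i = 1 ∧ D.hi i < S.l - 1 ∧ D.IsSupport (D.Xi i k)) ∨
   (k = 0 ∧ 1 < D.lo i ∧ D.hi i = S.l - 1 ∧ D.IsRigidI (D.Xi i k)) ∨
   (k = 0 ∧ D.lo i = 1 ∧ D.hi i = S.l - 1 ∧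
     (D.IsSupport (D.Xi i k) ∨ D.IsRigidI (D.Xi i k) ∨
       ∃ x ∈ D.Xi i k \ D.BI i, D.IsSuppToRigid (D.Xi i k) x)) ∨
   (k = 1 ∧ Odd i ∧ D.hi i = S.l - 1 ∧ D.hi (i + 1) = S.l - 1 ∧
     D.m i + D.m (i + 1) < S.l - 1 ∧ D.IsRigidI (D.Xi i k)) ∨
   (k = 1 ∧ Even i ∧ D.lo i = 1 ∧ D.lo (i + 1) = 1 ∧
     D.m i + D.m (i + 1) < S.l - 1 ∧ D.IsSupport (D.Xi i k)) ∨
   (k = 1 ∧ Odd i ∧ D.hi i = S.l - 1 ∧ D.hi (i + 1) = S.l - 1 ∧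
     D.m i + D.m (i + 1) = S.l - 1 ∧
     (D.IsRigidI (D.Xi i k) ∨
       ∃ x ∈ Finset.Icc (S.s i - (S.l - D.m (i + 1))) (S.s i - 1),
         D.IsSuppToRigid (D.Xi i k) x)) ∨
   (k = 1 ∧ Even i ∧ D.lo i = 1 ∧ D.lo (i + 1) = 1 ∧
     D.m i + D.m (i + 1) = S.l - 1 ∧
     (D.IsSupport (D.Xi i k) ∨
       ∃ x ∈ Finset.Icc (S.s i - (S.l - 1)) (S.s i - D.m i),
         D.IsSuppToRigid (D.Xi i k) x)) ∨
   (k = 2 ∧ S.d = 2 ∧ Even i ∧ D.lo i = 1 ∧ D.lo (i + 1) = S.l - D.lo (i + 2) + 1 ∧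
     D.hi (i + 1) = S.l - D.hi i - 1 ∧ D.hi (i + 2) = S.l - 1 ∧
     ∃ x ∈ Finset.Icc (S.s (i + 1) - D.lo (i + 2)) (S.s i - D.hi i),
       D.IsSuppToRigid (D.Xi i k) x))

/-- The configuration on `[i, i+k]` is full: `m_{i+j} = n_{i+j} - l_{i+j} + 1`. -/
def Full (D : CDatum S) (i k : ℤ) : Prop :=
  ∀ j, 0 ≤ j → j ≤ k → D.m (i + j) = D.hi (i + j) - D.lo (i + j) + 1

/-- `[a, b]` is a maximal run of indices with `X` nonempty
(an interval of the diagonal partition). -/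
def IsBlock (D : CDatum S) (a b : ℤ) : Prop :=
  2 ≤ a ∧ b ≤ S.p ∧ a ≤ b ∧ (∀ j, a ≤ j → j ≤ b → (D.X j).Nonempty) ∧
    D.X (a - 1) = ∅ ∧ D.X (b + 1) = ∅

/-- `[a, b]` is the first interval of the diagonal partition. -/
def FirstBlock (D : CDatum S) (a b : ℤ) : Prop :=
  D.IsBlock a b ∧ ∀ j, j < a → D.X j = ∅

/-- `[a, b]` is the last interval of the diagonal partition. -/
def LastBlock (D : CDatum S) (a b : ℤ) : Prop :=
  D.IsBlock a b ∧ ∀ j, b < j → D.X j = ∅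

/-- `[a, b]` and `[a', b']` are consecutive intervals of the diagonal partition. -/
def ConsecBlocks (D : CDatum S) (a b a' b' : ℤ) : Prop :=
  D.IsBlock a b ∧ D.IsBlock a' b' ∧ b < a' ∧ ∀ j, b < j → j < a' → D.X j = ∅

/-- The diagonal component `T = {i ∈ [2, p] : X i ≠ ∅}`. -/
noncomputable def T (D : CDatum S) : Finset ℤ :=
  {i ∈ Finset.Icc 2 S.p | (D.X i).Nonempty}

/-- The configuration on the block `[a, b]` is full admissible of type (III). -/
def FullType3 (D : CDatum S) (a b : ℤ) : Prop :=
  a = b ∧ D.lo a = 1 ∧ D.hi a = S.l - 1 ∧ D.m a = S.l - 1 ∧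
    (D.IsSupport (D.Xi a 0) ∨ D.IsRigidI (D.Xi a 0) ∨
      ∃ x ∈ D.Xi a 0 \ D.BI a, D.IsSuppToRigid (D.Xi a 0) x)

/-- A `Θ`-interval is rigid, support, or rigid to support. -/
def GoodTheta (D : CDatum S) (I : Finset ℤ) : Prop :=
  D.IsRigidI I ∨ D.IsSupport I ∨ ∃ x, D.IsRigidToSupp I x

/-- A `C`-datum is well-configured. -/
def WellConfigured (D : CDatum S) : Prop :=
  (D.T = ∅ ∧ ∃ x, 0 ≤ x ∧ x ≤ S.n ∧ D.R = Finset.Icc 1 x ∧ D.B = Finset.Icc (x + 1) S.n) ∨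
  (D.T.Nonempty ∧
    (∀ a b, D.IsBlock a b → D.Admissible a (b - a) ∧ D.Full a (b - a)) ∧
    (∀ a b a' b', D.ConsecBlocks a b a' b' →
      D.Xi a (b - a) ∩ D.Xi a' (b' - a') = ∅) ∧
    (∀ a b, D.FirstBlock a b → D.GoodTheta (Finset.Icc 1 (D.xiLo a - 1))) ∧
    (∀ a b a' b', D.ConsecBlocks a b a' b' →
      D.GoodTheta (Finset.Icc (D.xiHi b + 1) (D.xiLo a' - 1))) ∧
    (∀ a b, D.LastBlock a b → D.GoodTheta (Finset.Icc (D.xiHi b + 1) S.n)) ∧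
    (∀ a b, D.FirstBlock a b → D.IsRigidI (D.Xi a (b - a)) →
      D.IsRigidI (Finset.Icc 1 (D.xiLo a - 1)) ∨ D.FullType3 a b) ∧
    (∀ a b a' b', D.ConsecBlocks a b a' b' → D.IsRigidI (D.Xi a' (b' - a')) →
      D.IsRigidI (Finset.Icc (D.xiHi b + 1) (D.xiLo a' - 1)) ∨ D.FullType3 a' b') ∧
    (∀ a b a' b', D.ConsecBlocks a b a' b' → D.IsSupport (D.Xi a (b - a)) →
      D.IsSupport (Finset.Icc (D.xiHi b + 1) (D.xiLo a' - 1)) ∨ D.FullType3 a b) ∧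
    (∀ a b, D.LastBlock a b → D.IsSupport (D.Xi a (b - a)) →
      D.IsSupport (Finset.Icc (D.xiHi b + 1) S.n) ∨ D.FullType3 a b))

/-- The summand count `|R| + |B| + Σ_{i=2}^p m_i`. -/
noncomputable def count (D : CDatum S) : ℤ :=
  (D.R.card : ℤ) + (D.B.card : ℤ) + ∑ i ∈ Finset.Icc 2 S.p, D.m i

end CDatum


namespace Stmt16

open Finset

variable {S : NakSetup}

lemma even2 : Even (2:ℤ) := ⟨1, by norm_num⟩

lemma notodd2 : ¬ Odd (2:ℤ) := by
  rw [← Int.not_even_iff_odd]; simp [even2]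

lemma icc_min' (a b : ℤ) (h : (Finset.Icc a b).Nonempty) : (Finset.Icc a b).min' h = a := by
  have hab : a ≤ b := by
    obtain ⟨x, hx⟩ := h
    have := Finset.mem_Icc.mp hx
    omega
  refine le_antisymm (Finset.min'_le _ a (Finset.mem_Icc.mpr ⟨le_refl a, hab⟩)) ?_
  exact Finset.le_min' _ _ _ fun y hy => (Finset.mem_Icc.mp hy).1

lemma icc_max' (a b : ℤ) (h : (Finset.Icc a b).Nonempty) : (Finset.Icc a b).max' h = b := by
  have hab : a ≤ b := by
    obtain ⟨x, hx⟩ := h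
    have := Finset.mem_Icc.mp hx
    omega
  refine le_antisymm ?_ (Finset.le_max' _ b (Finset.mem_Icc.mpr ⟨hab, le_refl b⟩))
  exact Finset.max'_le _ _ _ fun y hy => (Finset.mem_Icc.mp hy).2

lemma hs1 (S : NakSetup) : S.s 1 = 1 := by
  have h := S.hs_odd 1 le_rfl S.hp odd_one
  linarith

lemma hs2 (S : NakSetup) (hp2 : S.p = 2) : S.s 2 = S.n := by
  have h1 := S.hs_even 2 (by norm_num) (by omega) even2
  have h2 := S.hn
  rw [hp2] at h2
  linarith

lemma hln (S : NakSetup) (hp2 : S.p = 2) : S.l + 1 ≤ S.n := by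
  have h2 := S.hn
  rw [hp2] at h2
  nlinarith [S.hd, S.hl, mul_nonneg (by linarith [S.hd] : (0:ℤ) ≤ S.d - 2) (by linarith [S.hl] : (0:ℤ) ≤ S.l)]

lemma CDatum.ext' {D E : CDatum S} (hX : D.X = E.X) (hR : D.R = E.R) (hB : D.B = E.B) :
    D = E := by
  cases D; cases E; simp_all

lemma xiLo2 (D : CDatum S) : D.xiLo 2 = 1 := by
  rw [CDatum.xiLo, if_neg notodd2]
  norm_num [hs1]

lemma xiHi2 (hp2 : S.p = 2) (D : CDatum S) : D.xiHi 2 = S.n := by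
  rw [CDatum.xiHi, if_pos even2, hs2 S hp2]

lemma Xi20 (hp2 : S.p = 2) (D : CDatum S) : D.Xi 2 0 = Finset.Icc 1 S.n := by
  rw [CDatum.Xi, xiLo2, show (2:ℤ) + 0 = 2 by norm_num, xiHi2 hp2]

lemma BI2 (hp2 : S.p = 2) (D : CDatum S) :
    D.BI 2 = Finset.Icc (S.n - D.hi 2 + 1) S.n := by
  rw [CDatum.BI, if_neg notodd2, hs2 S hp2]

lemma RI2 (D : CDatum S) : D.RI 2 = Finset.Icc 1 (S.l - D.lo 2) := by
  rw [CDatum.RI, if_neg notodd2, show (2:ℤ) - 1 = 1 by norm_num, hs1]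
  congr 1
  ring

lemma BigB2 (hp2 : S.p = 2) (D : CDatum S) : D.BigB = D.BI 2 := by
  rw [CDatum.BigB, hp2, Finset.Icc_self, Finset.singleton_biUnion]

lemma BigR2 (hp2 : S.p = 2) (D : CDatum S) : D.BigR = D.RI 2 := by
  rw [CDatum.BigR, hp2, Finset.Icc_self, Finset.singleton_biUnion]

lemma lo_eq (D : CDatum S) {a b : ℤ} (hab : a ≤ b) (h : D.X 2 = Finset.Icc a b) :
    D.lo 2 = a := by
  have hne : (D.X 2).Nonempty := by
    rw [h]; exact ⟨a, Finset.mem_Icc.mpr ⟨le_refl a, hab⟩⟩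
  have h1 : D.lo 2 = (D.X 2).min' hne := dif_pos hne
  rw [h1]
  have : (D.X 2).min' hne = (Finset.Icc a b).min' (by rw [← h]; exact hne) := by
    congr 1
  rw [this, icc_min']

lemma hi_eq (D : CDatum S) {a b : ℤ} (hab : a ≤ b) (h : D.X 2 = Finset.Icc a b) :
    D.hi 2 = b := by
  have hne : (D.X 2).Nonempty := by
    rw [h]; exact ⟨a, Finset.mem_Icc.mpr ⟨le_refl a, hab⟩⟩
  have h1 : D.hi 2 = (D.X 2).max' hne := dif_pos hne
  rw [h1]
  have : (D.X 2).max' hne = (Finset.Icc a b).max' (by rw [← h]; exact hne) := by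
    congr 1
  rw [this, icc_max']

lemma m_eq (D : CDatum S) {a b : ℤ} (hab : a ≤ b) (h : D.X 2 = Finset.Icc a b) :
    D.m 2 = b - a + 1 := by
  rw [CDatum.m, h, Int.card_Icc]
  omega

lemma X_interval (D : CDatum S) (hne : (D.X 2).Nonempty)
    (hm : D.m 2 = D.hi 2 - D.lo 2 + 1) :
    D.X 2 = Finset.Icc (D.lo 2) (D.hi 2) := by
  have hlo : D.lo 2 = (D.X 2).min' hne := dif_pos hne
  have hhi : D.hi 2 = (D.X 2).max' hne := dif_pos hne
  have hsub : D.X 2 ⊆ Finset.Icc (D.lo 2) (D.hi 2) := by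
    intro x hx
    rw [Finset.mem_Icc, hlo, hhi]
    exact ⟨Finset.min'_le _ _ hx, Finset.le_max' _ _ hx⟩
  refine Finset.eq_of_subset_of_card_le hsub ?_
  rw [Int.card_Icc]
  have hm' : ((D.X 2).card : ℤ) = D.hi 2 - D.lo 2 + 1 := hm
  omega

lemma isRigidI_empty (D : CDatum S) : D.IsRigidI ∅ := by
  constructor <;> simp [CDatum.IsRigidI]

lemma isSupport_empty (D : CDatum S) : D.IsSupport ∅ := by
  constructor <;> simp [CDatum.IsSupport]


/-- The `X 2`-component of the `c`-th well-configured datum. -/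
noncomputable def X2c (S : NakSetup) (c : ℤ) : Finset ℤ :=
  if c ≤ S.n then ∅
  else if c ≤ S.n + S.l - 2 then Finset.Icc 1 (c - S.n)
  else if c ≤ S.n + 2 * S.l - 4 then Finset.Icc (c - S.n - S.l + 3) (S.l - 1)
  else Finset.Icc 1 (S.l - 1)

/-- The `R`-component of the `c`-th well-configured datum. -/
noncomputable def Rc (S : NakSetup) (c : ℤ) : Finset ℤ :=
  if c ≤ S.n then Finset.Icc 1 c
  else if c ≤ S.n + S.l - 2 then ∅
  else if c ≤ S.n + 2 * S.l - 4 then Finset.Icc (S.n + 2 * S.l - 2 - c) S.n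
  else Finset.Icc (c - S.n - S.l + 3) S.n

/-- The `B`-component of the `c`-th well-configured datum. -/
noncomputable def Bc (S : NakSetup) (c : ℤ) : Finset ℤ :=
  if c ≤ S.n then Finset.Icc (c + 1) S.n
  else if c ≤ S.n + S.l - 2 then Finset.Icc 1 (2 * S.n - c)
  else if c ≤ S.n + 2 * S.l - 4 then ∅
  else Finset.Icc 1 (c - S.n - 2 * S.l + 3)

lemma X2c_sub (S : NakSetup) (c : ℤ) : X2c S c ⊆ Finset.Icc 1 (S.l - 1) := by
  have hl := S.hl
  unfold X2c
  split_ifs with h1 h2 h3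
  · simp
  · intro x hx; rw [Finset.mem_Icc] at *; omega
  · intro x hx; rw [Finset.mem_Icc] at *; omega
  · intro x hx; rw [Finset.mem_Icc] at *; omega

lemma Rc_sub (S : NakSetup) (c : ℤ) : Rc S c ⊆ Finset.Icc 1 S.n := by
  have hl := S.hl
  unfold Rc
  split_ifs with h1 h2 h3
  · intro x hx; rw [Finset.mem_Icc] at *; omega
  · simp
  · intro x hx; rw [Finset.mem_Icc] at *; omega
  · intro x hx; rw [Finset.mem_Icc] at *; omega

lemma Bc_sub (S : NakSetup) (hp2 : S.p = 2) (c : ℤ) (hc0 : 0 ≤ c)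
    (hc1 : c ≤ 2 * S.n + S.l - 2) : Bc S c ⊆ Finset.Icc 1 S.n := by
  have hl := S.hl
  have hn' := hln S hp2
  unfold Bc
  split_ifs with h1 h2 h3
  · intro x hx; rw [Finset.mem_Icc] at *; omega
  · intro x hx; rw [Finset.mem_Icc] at *; omega
  · simp
  · intro x hx; rw [Finset.mem_Icc] at *; omega

lemma RBc_disj (S : NakSetup) (c : ℤ) : Disjoint (Rc S c) (Bc S c) := by
  have hl := S.hl
  rw [Finset.disjoint_left]
  intro x hx hx'
  unfold Rc at hx
  unfold Bc at hx'
  split_ifs at hx hx' with h1 h2 h3 <;>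
    simp only [Finset.mem_Icc, Finset.notMem_empty] at hx hx' <;> omega

/-- The `c`-th well-configured datum. -/
noncomputable def Fc (S : NakSetup) (hp2 : S.p = 2) (c : ℤ) (hc0 : 0 ≤ c)
    (hc1 : c ≤ 2 * S.n + S.l - 2) : CDatum S where
  X i := if i = 2 then X2c S c else ∅
  R := Rc S c
  B := Bc S c
  hX i := by
    by_cases h : i = 2
    · simpa [h] using X2c_sub S c
    · simp [h]
  hXout i hi := by
    have h : i ≠ 2 := by
      rintro rfl
      exact hi ⟨by norm_num, by omega⟩
    simp [h]
  hR := Rc_sub S c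
  hB := Bc_sub S hp2 c hc0 hc1
  hRB := RBc_disj S c

lemma Fc_X2 (S : NakSetup) (hp2 : S.p = 2) (c : ℤ) (hc0 : 0 ≤ c)
    (hc1 : c ≤ 2 * S.n + S.l - 2) : (Fc S hp2 c hc0 hc1).X 2 = X2c S c := by
  simp [Fc]

lemma Fc_R (S : NakSetup) (hp2 : S.p = 2) (c : ℤ) (hc0 : 0 ≤ c)
    (hc1 : c ≤ 2 * S.n + S.l - 2) : (Fc S hp2 c hc0 hc1).R = Rc S c := rfl

lemma Fc_B (S : NakSetup) (hp2 : S.p = 2) (c : ℤ) (hc0 : 0 ≤ c)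
    (hc1 : c ≤ 2 * S.n + S.l - 2) : (Fc S hp2 c hc0 hc1).B = Bc S c := rfl

lemma blk22 (hp2 : S.p = 2) (D : CDatum S) {a b : ℤ} (h : D.IsBlock a b) :
    a = 2 ∧ b = 2 := by
  obtain ⟨h1, h2, h3, -, -, -⟩ := h
  omega

lemma noconsec (hp2 : S.p = 2) (D : CDatum S) {a b a' b' : ℤ}
    (h : D.ConsecBlocks a b a' b') : False := by
  obtain ⟨h1, h2, h3, -⟩ := h
  obtain ⟨rfl, rfl⟩ := blk22 hp2 D h1
  obtain ⟨rfl, rfl⟩ := blk22 hp2 D h2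
  omega

lemma wc_of (hp2 : S.p = 2) (D : CDatum S) (hne : (D.X 2).Nonempty)
    (hadm : D.Admissible 2 0) (hfull : D.Full 2 0) : D.WellConfigured := by
  have hn' := hln S hp2
  have hth0 : Finset.Icc 1 (D.xiLo 2 - 1) = ∅ := by
    rw [xiLo2]; exact Finset.Icc_eq_empty (by norm_num)
  have hth1 : Finset.Icc (D.xiHi 2 + 1) S.n = ∅ := by
    rw [xiHi2 hp2]; exact Finset.Icc_eq_empty (by omega)
  have h22 : (2:ℤ) - 2 = 0 := by norm_num
  right
  refine ⟨⟨2, ?_⟩, ?_, ?_, ?_, ?_, ?_, ?_, ?_, ?_, ?_⟩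
  · simp [CDatum.T, Finset.mem_filter, Finset.mem_Icc, hp2, hne]
  · intro a b hb
    obtain ⟨rfl, rfl⟩ := blk22 hp2 D hb
    rw [h22]
    exact ⟨hadm, hfull⟩
  · intro a b a' b' hc
    exact absurd hc (fun h => noconsec hp2 D h)
  · intro a b hfb
    obtain ⟨rfl, -⟩ := blk22 hp2 D hfb.1
    rw [hth0]
    exact Or.inl (isRigidI_empty D)
  · intro a b a' b' hc
    exact absurd hc (fun h => noconsec hp2 D h)
  · intro a b hlb
    obtain ⟨-, rfl⟩ := blk22 hp2 D hlb.1
    rw [hth1]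
    exact Or.inl (isRigidI_empty D)
  · intro a b hfb _
    obtain ⟨rfl, -⟩ := blk22 hp2 D hfb.1
    left; rw [hth0]; exact isRigidI_empty D
  · intro a b a' b' hc
    exact absurd hc (fun h => noconsec hp2 D h)
  · intro a b a' b' hc
    exact absurd hc (fun h => noconsec hp2 D h)
  · intro a b hlb _
    obtain ⟨-, rfl⟩ := blk22 hp2 D hlb.1
    left; rw [hth1]; exact isSupport_empty D

lemma wc_dest (hp2 : S.p = 2) (D : CDatum S) (h : D.WellConfigured)
    (hne : (D.X 2).Nonempty) : D.Admissible 2 0 ∧ D.Full 2 0 := by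
  rcases h with ⟨hT, -⟩ | ⟨-, hblk, -⟩
  · exfalso
    have : (2:ℤ) ∈ D.T := by
      simp [CDatum.T, Finset.mem_filter, Finset.mem_Icc, hp2, hne]
    rw [hT] at this
    exact absurd this (Finset.notMem_empty 2)
  · have hb : D.IsBlock 2 2 := by
      refine ⟨le_refl 2, by omega, le_refl 2, ?_, ?_, ?_⟩
      · intro j h1 h2
        have : j = 2 := by omega
        rwa [this]
      · exact D.hXout 1 (by rintro ⟨h, -⟩; omega)
      · exact D.hXout 3 (by rintro ⟨-, h⟩; omega)
    have := hblk 2 2 hb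
    rwa [show (2:ℤ) - 2 = 0 by norm_num] at this

lemma wc_dest0 (hp2 : S.p = 2) (D : CDatum S) (h : D.WellConfigured)
    (he : D.X 2 = ∅) :
    ∃ x, 0 ≤ x ∧ x ≤ S.n ∧ D.R = Finset.Icc 1 x ∧ D.B = Finset.Icc (x + 1) S.n := by
  rcases h with ⟨-, x, hx0, hx1, hR, hB⟩ | ⟨⟨i, hi⟩, -⟩
  · exact ⟨x, hx0, hx1, hR, hB⟩
  · exfalso
    rw [CDatum.T, Finset.mem_filter, Finset.mem_Icc, hp2] at hi
    have : i = 2 := by omega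
    rw [this, he] at hi
    exact absurd hi.2 (by simp)


lemma Fc_wc (S : NakSetup) (hp2 : S.p = 2) (c : ℤ) (hc0 : 0 ≤ c)
    (hc1 : c ≤ 2 * S.n + S.l - 2) : (Fc S hp2 c hc0 hc1).WellConfigured := by
  have hl := S.hl
  have hn' := hln S hp2
  set D := Fc S hp2 c hc0 hc1 with hD
  have hXf : D.X 2 = X2c S c := Fc_X2 S hp2 c hc0 hc1
  have hRf : D.R = Rc S c := rfl
  have hBf : D.B = Bc S c := rfl
  rcases le_or_gt c S.n with h1 | h1
  · -- empty configuration
    have hX2 : D.X 2 = ∅ := by rw [hXf]; unfold X2c; rw [if_pos h1]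
    left
    refine ⟨?_, c, hc0, h1, ?_, ?_⟩
    · rw [CDatum.T, Finset.filter_eq_empty_iff]
      intro i hi
      rw [hp2, Finset.mem_Icc] at hi
      have : i = 2 := by omega
      rw [this, hX2]
      simp
    · rw [hRf]; unfold Rc; rw [if_pos h1]
    · rw [hBf]; unfold Bc; rw [if_pos h1]
  rcases le_or_gt c (S.n + S.l - 2) with h2 | h2
  · -- type (I)
    have hX2 : D.X 2 = Finset.Icc 1 (c - S.n) := by
      rw [hXf]; unfold X2c; rw [if_neg (by omega), if_pos h2]
    have hab : (1:ℤ) ≤ c - S.n := by omega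
    have hlo := lo_eq D hab hX2
    have hhi := hi_eq D hab hX2
    have hm := m_eq D hab hX2
    have hne : (D.X 2).Nonempty := by
      rw [hX2]; exact ⟨1, Finset.mem_Icc.mpr ⟨le_refl 1, hab⟩⟩
    have hRe : D.R = ∅ := by
      rw [hRf]; unfold Rc; rw [if_neg (by omega), if_pos h2]
    have hBe : D.B = Finset.Icc 1 (2 * S.n - c) := by
      rw [hBf]; unfold Bc; rw [if_neg (by omega), if_pos h2]
    apply wc_of hp2 D hne
    · refine ⟨by norm_num, by omega, by norm_num, ?_, Or.inl ⟨rfl, hlo, by omega, ?_⟩⟩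
      · intro j hj1 hj2
        have : j = 0 := by omega
        subst this
        simpa using hne
      · rw [Xi20 hp2 D]
        constructor
        · rw [hRe]; simp
        · rw [hBe, BigB2 hp2 D, BI2 hp2 D, hhi]
          ext x
          simp only [Finset.mem_inter, Finset.mem_sdiff, Finset.mem_Icc]
          omega
    · intro j hj1 hj2
      have : j = 0 := by omega
      subst this
      rw [show (2:ℤ) + 0 = 2 by norm_num, hm, hhi, hlo]
  rcases le_or_gt c (S.n + 2 * S.l - 4) with h3 | h3
  · -- type (II)
    have hX2 : D.X 2 = Finset.Icc (c - S.n - S.l + 3) (S.l - 1) := by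
      rw [hXf]; unfold X2c; rw [if_neg (by omega), if_neg (by omega), if_pos h3]
    have hab : c - S.n - S.l + 3 ≤ S.l - 1 := by omega
    have hlo := lo_eq D hab hX2
    have hhi := hi_eq D hab hX2
    have hm := m_eq D hab hX2
    have hne : (D.X 2).Nonempty := by
      rw [hX2]; exact ⟨S.l - 1, Finset.mem_Icc.mpr ⟨hab, le_refl _⟩⟩
    have hRe : D.R = Finset.Icc (S.n + 2 * S.l - 2 - c) S.n := by
      rw [hRf]; unfold Rc; rw [if_neg (by omega), if_neg (by omega), if_pos h3]
    have hBe : D.B = ∅ := by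
      rw [hBf]; unfold Bc; rw [if_neg (by omega), if_neg (by omega), if_pos h3]
    apply wc_of hp2 D hne
    · refine ⟨by norm_num, by omega, by norm_num, ?_,
        Or.inr (Or.inl ⟨rfl, by omega, hhi, ?_⟩)⟩
      · intro j hj1 hj2
        have : j = 0 := by omega
        subst this
        simpa using hne
      · rw [Xi20 hp2 D]
        constructor
        · rw [hBe]; simp
        · rw [hRe, BigR2 hp2 D, RI2 D, hlo]
          ext x
          simp only [Finset.mem_inter, Finset.mem_sdiff, Finset.mem_Icc]
          omega
    · intro j hj1 hj2
      have : j = 0 := by omega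
      subst this
      rw [show (2:ℤ) + 0 = 2 by norm_num, hm, hhi, hlo]
  · -- type (III)
    have hX2 : D.X 2 = Finset.Icc 1 (S.l - 1) := by
      rw [hXf]; unfold X2c; rw [if_neg (by omega), if_neg (by omega), if_neg (by omega)]
    have hab : (1:ℤ) ≤ S.l - 1 := by omega
    have hlo := lo_eq D hab hX2
    have hhi := hi_eq D hab hX2
    have hm := m_eq D hab hX2
    have hne : (D.X 2).Nonempty := by
      rw [hX2]; exact ⟨1, Finset.mem_Icc.mpr ⟨le_refl 1, hab⟩⟩
    have hRe : D.R = Finset.Icc (c - S.n - S.l + 3) S.n := by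
      rw [hRf]; unfold Rc; rw [if_neg (by omega), if_neg (by omega), if_neg (by omega)]
    have hBe : D.B = Finset.Icc 1 (c - S.n - 2 * S.l + 3) := by
      rw [hBf]; unfold Bc; rw [if_neg (by omega), if_neg (by omega), if_neg (by omega)]
    apply wc_of hp2 D hne
    · refine ⟨by norm_num, by omega, by norm_num, ?_,
        Or.inr (Or.inr (Or.inl ⟨rfl, hlo, hhi, ?_⟩))⟩
      · intro j hj1 hj2
        have : j = 0 := by omega
        subst this
        simpa using hne
      · rw [Xi20 hp2 D, BI2 hp2 D, hhi]
        by_cases hu0 : c ≤ S.n + 2 * S.l - 3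
        · -- rigid
          refine Or.inr (Or.inl ⟨?_, ?_⟩)
          · rw [hBe]
            ext x
            simp only [Finset.mem_inter, Finset.mem_Icc, Finset.notMem_empty, iff_false,
              not_and, and_imp]
            omega
          · rw [hRe, BigR2 hp2 D, RI2 D, hlo]
            ext x
            simp only [Finset.mem_inter, Finset.mem_sdiff, Finset.mem_Icc]
            omega
        by_cases hu1 : 2 * S.n + S.l - 2 ≤ c
        · -- support
          refine Or.inl ⟨?_, ?_⟩
          · rw [hRe]
            ext x
            simp only [Finset.mem_inter, Finset.mem_Icc, Finset.notMem_empty, iff_false,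
              not_and, and_imp]
            omega
          · rw [hBe, BigB2 hp2 D, BI2 hp2 D, hhi]
            ext x
            simp only [Finset.mem_inter, Finset.mem_sdiff, Finset.mem_Icc]
            omega
        · -- support to rigid
          refine Or.inr (Or.inr ⟨c - S.n - 2 * S.l + 3, ?_, ?_, ?_, ?_, ?_, ?_⟩)
          · simp only [Finset.mem_sdiff, Finset.mem_Icc]
            omega
          · simp only [Finset.mem_Icc]
            omega
          · rw [hBe]
            ext x
            simp only [Finset.mem_inter, Finset.mem_filter, Finset.mem_Icc]
            omega
          · refine ⟨1, ?_⟩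
            rw [hBe]
            simp only [Finset.mem_inter, Finset.mem_Icc]
            omega
          · rw [hRe]
            ext x
            simp only [Finset.mem_inter, Finset.mem_filter, Finset.mem_Icc]
            omega
          · refine ⟨c - S.n - S.l + 3, ?_⟩
            rw [hRe]
            simp only [Finset.mem_inter, Finset.mem_Icc]
            omega
    · intro j hj1 hj2
      have : j = 0 := by omega
      subst this
      rw [show (2:ℤ) + 0 = 2 by norm_num, hm, hhi, hlo]


/-- Decoding a datum back to its index. -/
noncomputable def gD (S : NakSetup) (D : CDatum S) : ℤ :=
  if (D.X 2).Nonempty then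
    (if D.lo 2 = 1 ∧ D.hi 2 = S.l - 1 then S.n + 2 * S.l - 3 + D.B.card
     else if D.lo 2 = 1 then S.n + D.hi 2
     else S.n + S.l - 3 + D.lo 2)
  else (D.R.card : ℤ)

lemma gF (S : NakSetup) (hp2 : S.p = 2) (c : ℤ) (hc0 : 0 ≤ c)
    (hc1 : c ≤ 2 * S.n + S.l - 2) : gD S (Fc S hp2 c hc0 hc1) = c := by
  have hl := S.hl
  have hn' := hln S hp2
  set D := Fc S hp2 c hc0 hc1 with hD
  have hXf : D.X 2 = X2c S c := Fc_X2 S hp2 c hc0 hc1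
  have hRf : D.R = Rc S c := rfl
  have hBf : D.B = Bc S c := rfl
  rcases le_or_gt c S.n with h1 | h1
  · have hX2 : D.X 2 = ∅ := by rw [hXf]; unfold X2c; rw [if_pos h1]
    have hRe : D.R = Finset.Icc 1 c := by rw [hRf]; unfold Rc; rw [if_pos h1]
    unfold gD
    rw [if_neg (by rw [hX2]; simp), hRe, Int.card_Icc]
    omega
  rcases le_or_gt c (S.n + S.l - 2) with h2 | h2
  · have hX2 : D.X 2 = Finset.Icc 1 (c - S.n) := by
      rw [hXf]; unfold X2c; rw [if_neg (by omega), if_pos h2]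
    have hab : (1:ℤ) ≤ c - S.n := by omega
    have hlo := lo_eq D hab hX2
    have hhi := hi_eq D hab hX2
    have hne : (D.X 2).Nonempty := by
      rw [hX2]; exact ⟨1, Finset.mem_Icc.mpr ⟨le_refl 1, hab⟩⟩
    unfold gD
    rw [if_pos hne, if_neg (by rintro ⟨-, hx⟩; omega), if_pos hlo]
    omega
  rcases le_or_gt c (S.n + 2 * S.l - 4) with h3 | h3
  · have hX2 : D.X 2 = Finset.Icc (c - S.n - S.l + 3) (S.l - 1) := by
      rw [hXf]; unfold X2c; rw [if_neg (by omega), if_neg (by omega), if_pos h3]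
    have hab : c - S.n - S.l + 3 ≤ S.l - 1 := by omega
    have hlo := lo_eq D hab hX2
    have hne : (D.X 2).Nonempty := by
      rw [hX2]; exact ⟨S.l - 1, Finset.mem_Icc.mpr ⟨hab, le_refl _⟩⟩
    unfold gD
    rw [if_pos hne, if_neg (by rintro ⟨hx, -⟩; omega), if_neg (by omega)]
    omega
  · have hX2 : D.X 2 = Finset.Icc 1 (S.l - 1) := by
      rw [hXf]; unfold X2c; rw [if_neg (by omega), if_neg (by omega), if_neg (by omega)]
    have hab : (1:ℤ) ≤ S.l - 1 := by omega
    have hlo := lo_eq D hab hX2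
    have hhi := hi_eq D hab hX2
    have hne : (D.X 2).Nonempty := by
      rw [hX2]; exact ⟨1, Finset.mem_Icc.mpr ⟨le_refl 1, hab⟩⟩
    have hBe : D.B = Finset.Icc 1 (c - S.n - 2 * S.l + 3) := by
      rw [hBf]; unfold Bc; rw [if_neg (by omega), if_neg (by omega), if_neg (by omega)]
    unfold gD
    rw [if_pos hne, if_pos ⟨hlo, hhi⟩, hBe, Int.card_Icc]
    omega

lemma wc_surj (S : NakSetup) (hp2 : S.p = 2) (D : CDatum S) (hD : D.WellConfigured) :
    ∃ c, ∃ (h0 : 0 ≤ c) (h1 : c ≤ 2 * S.n + S.l - 2), Fc S hp2 c h0 h1 = D := by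
  have hl := S.hl
  have hn' := hln S hp2
  by_cases hne : (D.X 2).Nonempty
  · obtain ⟨hadm, hfull⟩ := wc_dest hp2 D hD hne
    have hm : D.m 2 = D.hi 2 - D.lo 2 + 1 := by simpa using hfull 0 le_rfl le_rfl
    have hX2 := X_interval D hne hm
    have hlomem : D.lo 2 ∈ D.X 2 := by
      have h1 : D.lo 2 = (D.X 2).min' hne := dif_pos hne
      rw [h1]; exact Finset.min'_mem _ _
    have himem : D.hi 2 ∈ D.X 2 := by
      have h1 : D.hi 2 = (D.X 2).max' hne := dif_pos hne
      rw [h1]; exact Finset.max'_mem _ _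
    have hlob := Finset.mem_Icc.mp (D.hX 2 hlomem)
    have hhib := Finset.mem_Icc.mp (D.hX 2 himem)
    have hlohi : D.lo 2 ≤ D.hi 2 := by
      have h1 : D.lo 2 = (D.X 2).min' hne := dif_pos hne
      have h2 : D.hi 2 = (D.X 2).max' hne := dif_pos hne
      rw [h1, h2]; exact Finset.min'_le _ _ (Finset.max'_mem _ _)
    rcases hadm.2.2.2.2 with h | h | h | h | h | h | h | h
    · -- type (I)
      obtain ⟨-, hlo1, hhilt, hsupp⟩ := h
      rw [Xi20 hp2 D] at hsupp
      obtain ⟨hR1, hB1⟩ := hsupp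
      rw [Finset.inter_eq_left.mpr D.hR] at hR1
      rw [Finset.inter_eq_left.mpr D.hB, BigB2 hp2 D, BI2 hp2 D] at hB1
      have hBe : D.B = Finset.Icc 1 (S.n - D.hi 2) := by
        rw [hB1]; ext x
        simp only [Finset.mem_sdiff, Finset.mem_Icc]
        omega
      refine ⟨S.n + D.hi 2, by omega, by omega, ?_⟩
      apply CDatum.ext'
      · funext i
        show (if i = 2 then X2c S (S.n + D.hi 2) else ∅) = D.X i
        by_cases h : i = 2
        · subst h
          rw [if_pos rfl, hX2, hlo1]
          unfold X2c
          rw [if_neg (by omega), if_pos (by omega)]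
          congr 1
          ring
        · rw [if_neg h, eq_comm]
          exact D.hXout i (by rintro ⟨ha, hb⟩; omega)
      · show Rc S (S.n + D.hi 2) = D.R
        rw [hR1]; unfold Rc
        rw [if_neg (by omega), if_pos (by omega)]
      · show Bc S (S.n + D.hi 2) = D.B
        rw [hBe]; unfold Bc
        rw [if_neg (by omega), if_pos (by omega)]
        congr 1
        ring
    · -- type (II)
      obtain ⟨-, hlo1, hhil, hrig⟩ := h
      rw [Xi20 hp2 D] at hrig
      obtain ⟨hB1, hR1⟩ := hrig
      rw [Finset.inter_eq_left.mpr D.hB] at hB1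
      rw [Finset.inter_eq_left.mpr D.hR, BigR2 hp2 D, RI2 D] at hR1
      have hRe : D.R = Finset.Icc (S.l - D.lo 2 + 1) S.n := by
        rw [hR1]; ext x
        simp only [Finset.mem_sdiff, Finset.mem_Icc]
        omega
      refine ⟨S.n + S.l - 3 + D.lo 2, by omega, by omega, ?_⟩
      apply CDatum.ext'
      · funext i
        show (if i = 2 then X2c S (S.n + S.l - 3 + D.lo 2) else ∅) = D.X i
        by_cases h : i = 2
        · subst h
          rw [if_pos rfl, hX2, hhil]
          unfold X2c
          rw [if_neg (by omega), if_neg (by omega), if_pos (by omega)]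
          congr 1
          ring
        · rw [if_neg h, eq_comm]
          exact D.hXout i (by rintro ⟨ha, hb⟩; omega)
      · show Rc S (S.n + S.l - 3 + D.lo 2) = D.R
        rw [hRe]; unfold Rc
        rw [if_neg (by omega), if_neg (by omega), if_pos (by omega)]
        congr 1
        ring
      · show Bc S (S.n + S.l - 3 + D.lo 2) = D.B
        rw [hB1]; unfold Bc
        rw [if_neg (by omega), if_neg (by omega), if_pos (by omega)]
    · -- type (III)
      obtain ⟨-, hlo1, hhi1, hc3⟩ := h
      rcases hc3 with hsupp | hrig | ⟨x, hxmem, hs2r⟩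
      · -- support
        rw [Xi20 hp2 D] at hsupp
        obtain ⟨hR1, hB1⟩ := hsupp
        rw [Finset.inter_eq_left.mpr D.hR] at hR1
        rw [Finset.inter_eq_left.mpr D.hB, BigB2 hp2 D, BI2 hp2 D, hhi1] at hB1
        have hBe : D.B = Finset.Icc 1 (S.n - S.l + 1) := by
          rw [hB1]; ext t
          simp only [Finset.mem_sdiff, Finset.mem_Icc]
          omega
        refine ⟨2 * S.n + S.l - 2, by omega, by omega, ?_⟩
        apply CDatum.ext'
        · funext i
          show (if i = 2 then X2c S (2 * S.n + S.l - 2) else ∅) = D.X i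
          by_cases h : i = 2
          · subst h
            rw [if_pos rfl, hX2, hlo1, hhi1]
            unfold X2c
            rw [if_neg (by omega), if_neg (by omega), if_neg (by omega)]
          · rw [if_neg h, eq_comm]
            exact D.hXout i (by rintro ⟨ha, hb⟩; omega)
        · show Rc S (2 * S.n + S.l - 2) = D.R
          rw [hR1]; unfold Rc
          rw [if_neg (by omega), if_neg (by omega), if_neg (by omega)]
          exact Finset.Icc_eq_empty (by omega)
        · show Bc S (2 * S.n + S.l - 2) = D.B
          rw [hBe]; unfold Bc
          rw [if_neg (by omega), if_neg (by omega), if_neg (by omega)]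
          congr 1
          ring
      · -- rigid
        rw [Xi20 hp2 D] at hrig
        obtain ⟨hB1, hR1⟩ := hrig
        rw [Finset.inter_eq_left.mpr D.hB] at hB1
        rw [Finset.inter_eq_left.mpr D.hR, BigR2 hp2 D, RI2 D, hlo1] at hR1
        have hRe : D.R = Finset.Icc S.l S.n := by
          rw [hR1]; ext t
          simp only [Finset.mem_sdiff, Finset.mem_Icc]
          omega
        refine ⟨S.n + 2 * S.l - 3, by omega, by omega, ?_⟩
        apply CDatum.ext'
        · funext i
          show (if i = 2 then X2c S (S.n + 2 * S.l - 3) else ∅) = D.X i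
          by_cases h : i = 2
          · subst h
            rw [if_pos rfl, hX2, hlo1, hhi1]
            unfold X2c
            rw [if_neg (by omega), if_neg (by omega), if_neg (by omega)]
          · rw [if_neg h, eq_comm]
            exact D.hXout i (by rintro ⟨ha, hb⟩; omega)
        · show Rc S (S.n + 2 * S.l - 3) = D.R
          rw [hRe]; unfold Rc
          rw [if_neg (by omega), if_neg (by omega), if_neg (by omega)]
          congr 1
          ring
        · show Bc S (S.n + 2 * S.l - 3) = D.B
          rw [hB1]; unfold Bc
          rw [if_neg (by omega), if_neg (by omega), if_neg (by omega)]
          exact Finset.Icc_eq_empty (by omega)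
      · -- support to rigid
        rw [Xi20 hp2 D, BI2 hp2 D, hhi1] at hxmem
        simp only [Finset.mem_sdiff, Finset.mem_Icc] at hxmem
        rw [Xi20 hp2 D] at hs2r
        obtain ⟨hxI, hBfil, hBne, hRfil, hRne⟩ := hs2r
        obtain ⟨y, hy⟩ := hBne
        rw [hBfil] at hy
        simp only [Finset.mem_filter, Finset.mem_Icc] at hy
        obtain ⟨z, hz⟩ := hRne
        rw [hRfil] at hz
        simp only [Finset.mem_filter, Finset.mem_Icc] at hz
        rw [Finset.inter_eq_left.mpr D.hB] at hBfil
        rw [Finset.inter_eq_left.mpr D.hR] at hRfil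
        have hBe : D.B = Finset.Icc 1 x := by
          rw [hBfil]; ext t
          simp only [Finset.mem_filter, Finset.mem_Icc]
          omega
        have hRe : D.R = Finset.Icc (x + S.l) S.n := by
          rw [hRfil]; ext t
          simp only [Finset.mem_filter, Finset.mem_Icc]
          omega
        refine ⟨S.n + 2 * S.l - 3 + x, by omega, by omega, ?_⟩
        apply CDatum.ext'
        · funext i
          show (if i = 2 then X2c S (S.n + 2 * S.l - 3 + x) else ∅) = D.X i
          by_cases h : i = 2
          · subst h
            rw [if_pos rfl, hX2, hlo1, hhi1]
            unfold X2c
            rw [if_neg (by omega), if_neg (by omega), if_neg (by omega)]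
          · rw [if_neg h, eq_comm]
            exact D.hXout i (by rintro ⟨ha, hb⟩; omega)
        · show Rc S (S.n + 2 * S.l - 3 + x) = D.R
          rw [hRe]; unfold Rc
          rw [if_neg (by omega), if_neg (by omega), if_neg (by omega)]
          congr 1
          ring
        · show Bc S (S.n + 2 * S.l - 3 + x) = D.B
          rw [hBe]; unfold Bc
          rw [if_neg (by omega), if_neg (by omega), if_neg (by omega)]
          congr 1
          ring
    · exact absurd h.1 (by norm_num)
    · exact absurd h.1 (by norm_num)
    · exact absurd h.1 (by norm_num)
    · exact absurd h.1 (by norm_num)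
    · exact absurd h.1 (by norm_num)
  · have hX2 : D.X 2 = ∅ := Finset.not_nonempty_iff_eq_empty.mp hne
    obtain ⟨x, hx0, hx1, hRe, hBe⟩ := wc_dest0 hp2 D hD hX2
    refine ⟨x, hx0, by omega, ?_⟩
    apply CDatum.ext'
    · funext i
      show (if i = 2 then X2c S x else ∅) = D.X i
      by_cases h : i = 2
      · subst h
        rw [if_pos rfl, hX2]
        unfold X2c
        rw [if_pos hx1]
      · rw [if_neg h, eq_comm]
        exact D.hXout i (by rintro ⟨ha, hb⟩; omega)
    · show Rc S x = D.R
      rw [hRe]; unfold Rc; rw [if_pos hx1]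
    · show Bc S x = D.B
      rw [hBe]; unfold Bc; rw [if_pos hx1]

end Stmt16

/-- if `p = 2` then there are exactly `2n + l - 1` well-configured
`C`-data. -/
theorem stmt16 (S : NakSetup) (hp2 : S.p = 2) :
    (Nat.card {D : CDatum S // D.WellConfigured} : ℤ) = 2 * S.n + S.l - 1 := by
  have hl := S.hl
  have hn' := Stmt16.hln S hp2
  have hbij : Function.Bijective
      (fun c : (Finset.Icc (0:ℤ) (2 * S.n + S.l - 2) : Finset ℤ) =>
        (⟨Stmt16.Fc S hp2 c.1 (Finset.mem_Icc.mp c.2).1 (Finset.mem_Icc.mp c.2).2,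
          Stmt16.Fc_wc S hp2 c.1 _ _⟩ : {D : CDatum S // D.WellConfigured})) := by
    constructor
    · intro c c' h
      have h' := congrArg (Stmt16.gD S) (congrArg Subtype.val h)
      rw [Stmt16.gF, Stmt16.gF] at h'
      exact Subtype.ext h'
    · rintro ⟨D, hD⟩
      obtain ⟨c, h0, h1, hFc⟩ := Stmt16.wc_surj S hp2 D hD
      exact ⟨⟨c, Finset.mem_Icc.mpr ⟨h0, h1⟩⟩, Subtype.ext hFc⟩
  have hcard := Nat.card_eq_of_bijective _ hbij
  rw [Nat.card_eq_finsetCard] at hcard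
  rw [← hcard, Int.card_Icc]
  omega
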